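/- Let 0 < ζ < 1/2 and define h_{jk} = Σ_{t=1}^n (t+j)^{-1}|λ_{kt}| where |λ_{kt}| ≤ C k^ζ t^{-ζ-1} for 1 ≤ k ≤ t and |λ_{kt}| ≤ C k^{ζ-1} max(k^{-ζ}, t^{-ζ}) for k > t. Then for all j ≥ 1: h_{jk} ≤ C' j^{-1/2} min(j^{-1/2}, k^{-1/2}) for 1 ≤ k ≤ n, and h_{jk} ≤ C' j^{-1} k^{ζ-1} n^{1/2-ζ} min(j^{1/2}, n^{1/2}) for k ≥ n. -/

import Mathlib

open Real Finset

private lemma bern_up15 {u p : ℝ} (hu1 : u ≤ 1) (hp0 : 0 ≤ p) (hp1 : p ≤ 1) :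
    (1 - u) ^ p ≤ 1 - p * u := by
  have := rpow_one_add_le_one_add_mul_self (s := -u) (by linarith) hp0 hp1
  simpa [sub_eq_add_neg, mul_neg] using this

private lemma bern_neg15 {u q : ℝ} (hu0 : 0 ≤ u) (hu1 : u < 1) (hq0 : 0 ≤ q) (hq1 : q ≤ 1) :
    1 + q * u ≤ (1 - u) ^ (-q) := by
  have h1 : (0:ℝ) < 1 - u := by linarith
  have h2 : (1 - u) ^ q ≤ 1 - q * u := bern_up15 hu1.le hq0 hq1
  have h3 : (0:ℝ) < (1 - u) ^ q := Real.rpow_pos_of_pos h1 q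
  rw [Real.rpow_neg h1.le, le_inv_comm₀ (by positivity) h3]
  have h4 : (0:ℝ) < 1 + q * u := by positivity
  rw [inv_eq_one_div, le_div_iff₀ h4]
  calc (1 - u) ^ q * (1 + q * u) ≤ (1 - q * u) * (1 + q * u) := by
        apply mul_le_mul_of_nonneg_right h2 h4.le
    _ = 1 - (q*u)^2 := by ring
    _ ≤ 1 := by nlinarith [sq_nonneg (q*u)]

private lemma sumA15 (s : ℝ) (hs0 : 0 ≤ s) (hs1 : s < 1) :
    ∀ n : ℕ, ∑ t ∈ Finset.Icc 1 n, (t : ℝ) ^ (-s) ≤ (1 - s)⁻¹ * (n : ℝ) ^ (1 - s) := by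
  have hp0 : (0:ℝ) < 1 - s := by linarith
  intro n
  induction n with
  | zero => simp [Real.zero_rpow hp0.ne']
  | succ n ih =>
      rw [Finset.sum_Icc_succ_top (by omega : 1 ≤ n + 1)]
      have hy : (0:ℝ) < (n:ℝ) + 1 := by positivity
      set y : ℝ := (n:ℝ) + 1 with hydef
      have key : (n:ℝ) ^ (1 - s) + (1 - s) * y ^ (-s) ≤ y ^ (1 - s) := by
        have hu1 : 1 / y ≤ 1 := by
          rw [div_le_one hy]; simp [hydef]
        have hb := bern_up15 hu1 hp0.le (by linarith : 1 - s ≤ 1)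
        have hn : (n:ℝ) = y * (1 - 1/y) := by
          field_simp [hydef]
          linarith
        have h5 : (n:ℝ) ^ (1-s) = y ^ (1-s) * (1 - 1/y) ^ (1-s) := by
          rw [hn, Real.mul_rpow hy.le (by linarith)]
        have h6 : y ^ (1-s) * (1 - 1/y) ^ (1-s) ≤ y ^ (1-s) * (1 - (1-s) * (1/y)) := by
          apply mul_le_mul_of_nonneg_left hb (Real.rpow_nonneg hy.le _)
        have h7 : y ^ (1-s) * (1/y) = y ^ (-s) := by
          rw [one_div, ← Real.rpow_neg_one y, ← Real.rpow_add hy]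
          ring_nf
        nlinarith [h5, h6, h7]
      have hnn : (0:ℝ) ≤ y ^ (-s) := Real.rpow_nonneg hy.le _
      have hcast : ((n:ℕ) + 1 : ℝ) = y := by push_cast [hydef]; ring
      push_cast
      rw [hcast] at *
      nlinarith [key, hp0, mul_le_mul_of_nonneg_left key (inv_nonneg.mpr hp0.le),
        inv_mul_cancel₀ hp0.ne']

private lemma sumB15 (s : ℝ) (hs1 : 1 < s) (hs2 : s ≤ 2) (k : ℕ) (hk : 1 ≤ k) :
    ∀ n : ℕ, ∑ t ∈ Finset.Icc (k+1) n, (t : ℝ) ^ (-s)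
      ≤ (s - 1)⁻¹ * ((k : ℝ) ^ (1 - s) - (max (n:ℝ) (k:ℝ)) ^ (1 - s)) := by
  have hq0 : (0:ℝ) < s - 1 := by linarith
  intro n
  induction n with
  | zero =>
      simp only [Finset.Icc_eq_empty_of_lt (by omega : (0:ℕ) < k + 1), Finset.sum_empty]
      rw [max_eq_right (by exact_mod_cast Nat.zero_le k : ((0:ℕ):ℝ) ≤ (k:ℝ))]
      simp
  | succ n ih =>
      rcases lt_or_ge n k with hnk | hnk
      · rw [Finset.Icc_eq_empty_of_lt (by omega : n + 1 < k + 1)]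
        push_cast
        rw [max_eq_right (by exact_mod_cast (by omega : n + 1 ≤ k) : ((n:ℝ)+1 ≤ (k:ℝ)))]
        simp
      · rw [Finset.sum_Icc_succ_top (by omega : k + 1 ≤ n + 1)]
        push_cast
        rw [max_eq_left (by exact_mod_cast hnk : ((k:ℝ) ≤ (n:ℝ)))] at ih
        rw [max_eq_left (by exact_mod_cast (by omega : k ≤ n+1) : ((k:ℝ) ≤ (n:ℝ)+1))]
        have hy : (0:ℝ) < (n:ℝ) + 1 := by positivity
        set y : ℝ := (n:ℝ) + 1 with hydef
        have hn1 : (1:ℝ) ≤ (n:ℝ) := by exact_mod_cast le_trans hk hnk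
        have key : y ^ (1 - s) + (s - 1) * y ^ (-s) ≤ (n:ℝ) ^ (1 - s) := by
          have hu0 : 0 ≤ 1 / y := by positivity
          have hu1 : 1 / y < 1 := by
            rw [div_lt_one hy]; simp [hydef]; linarith
          have hb := bern_neg15 hu0 hu1 hq0.le (by linarith : s - 1 ≤ 1)
          rw [neg_sub] at hb
          have hn : (n:ℝ) = y * (1 - 1/y) := by field_simp [hydef]; linarith
          have h5 : (n:ℝ) ^ (1-s) = y ^ (1-s) * (1 - 1/y) ^ (1-s) := by
            rw [hn, Real.mul_rpow hy.le (by linarith)]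
          have h6 : y ^ (1-s) * (1 + (s-1) * (1/y)) ≤ y ^ (1-s) * (1 - 1/y) ^ (1-s) := by
            apply mul_le_mul_of_nonneg_left hb (Real.rpow_nonneg hy.le _)
          have h7 : y ^ (1-s) * (1/y) = y ^ (-s) := by
            rw [one_div, ← Real.rpow_neg_one y, ← Real.rpow_add hy]
            ring_nf
          nlinarith [h5, h6, h7]
        have h8 : y ^ (-s) ≤ (s - 1)⁻¹ * ((n:ℝ) ^ (1-s) - y ^ (1-s)) := by
          have h9 := mul_le_mul_of_nonneg_left (by linarith [key] :
            (s - 1) * y ^ (-s) ≤ (n:ℝ) ^ (1-s) - y ^ (1-s)) (inv_nonneg.mpr hq0.le)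
          calc y ^ (-s) = (s-1)⁻¹ * ((s-1) * y ^ (-s)) := by
                field_simp
            _ ≤ _ := h9
        calc ∑ t ∈ Finset.Icc (k+1) n, (t : ℝ) ^ (-s) + y ^ (-s)
            ≤ (s - 1)⁻¹ * ((k:ℝ) ^ (1 - s) - (n:ℝ) ^ (1 - s))
              + (s - 1)⁻¹ * ((n:ℝ) ^ (1-s) - y ^ (1-s)) := add_le_add ih h8
          _ = (s - 1)⁻¹ * ((k:ℝ) ^ (1 - s) - y ^ (1 - s)) := by ring

private lemma sumB15' (s : ℝ) (hs1 : 1 < s) (hs2 : s ≤ 2) (k : ℕ) (hk : 1 ≤ k) (n : ℕ) :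
    ∑ t ∈ Finset.Icc (k+1) n, (t : ℝ) ^ (-s) ≤ (s - 1)⁻¹ * (k : ℝ) ^ (1 - s) := by
  refine (sumB15 s hs1 hs2 k hk n).trans ?_
  have h1 : (0:ℝ) ≤ (max (n:ℝ) (k:ℝ)) ^ (1 - s) := Real.rpow_nonneg (by positivity) _
  have h2 : (0:ℝ) < s - 1 := by linarith
  nlinarith [mul_nonneg (inv_nonneg.mpr h2.le) h1]

theorem stmt15 (ζ : ℝ) (hζ1 : 0 < ζ) (hζ2 : ζ < 1 / 2)
    (lam : ℕ → ℕ → ℝ) (C : ℝ)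
    (h1 : ∀ k t : ℕ, 1 ≤ k → k ≤ t →
      |lam k t| ≤ C * (k : ℝ) ^ ζ * (t : ℝ) ^ (-ζ - 1))
    (h2 : ∀ k t : ℕ, 1 ≤ t → t < k →
      |lam k t| ≤ C * (k : ℝ) ^ (ζ - 1) * max ((k : ℝ) ^ (-ζ)) ((t : ℝ) ^ (-ζ))) :
    ∃ C' : ℝ, 0 < C' ∧ ∀ n j k : ℕ, 1 ≤ n → 1 ≤ j → 1 ≤ k →
      (k ≤ n →
        ∑ t ∈ Finset.Icc 1 n, ((t : ℝ) + j)⁻¹ * |lam k t|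
          ≤ C' * (j : ℝ) ^ (-(1 : ℝ) / 2) *
              min ((j : ℝ) ^ (-(1 : ℝ) / 2)) ((k : ℝ) ^ (-(1 : ℝ) / 2))) ∧
      (n ≤ k →
        ∑ t ∈ Finset.Icc 1 n, ((t : ℝ) + j)⁻¹ * |lam k t|
          ≤ C' * (j : ℝ)⁻¹ * (k : ℝ) ^ (ζ - 1) * (n : ℝ) ^ (1 / 2 - ζ) *
              min ((j : ℝ) ^ ((1 : ℝ) / 2)) ((n : ℝ) ^ ((1 : ℝ) / 2))) := by
  set C₀ : ℝ := max C 1 with hC₀def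
  have hC₀1 : (1:ℝ) ≤ C₀ := le_max_right _ _
  have hC₀0 : (0:ℝ) < C₀ := lt_of_lt_of_le one_pos hC₀1
  have hCC₀ : C ≤ C₀ := le_max_left _ _
  -- weight bound
  have wbound : ∀ θ : ℝ, 0 ≤ θ → θ ≤ 1 → ∀ t j : ℕ, 1 ≤ t → 1 ≤ j →
      ((t:ℝ) + (j:ℝ))⁻¹ ≤ (j:ℝ) ^ (θ - 1) * (t:ℝ) ^ (-θ) := by
    intro θ hθ0 hθ1 t j ht hj
    have ht0 : (0:ℝ) < (t:ℝ) := by exact_mod_cast Nat.lt_of_lt_of_le Nat.zero_lt_one ht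
    have hj0 : (0:ℝ) < (j:ℝ) := by exact_mod_cast Nat.lt_of_lt_of_le Nat.zero_lt_one hj
    set M : ℝ := max (t:ℝ) (j:ℝ) with hMdef
    have hM0 : (0:ℝ) < M := lt_of_lt_of_le ht0 (le_max_left _ _)
    have hA : (t:ℝ) ^ θ ≤ M ^ θ := Real.rpow_le_rpow ht0.le (le_max_left _ _) hθ0
    have hB : (j:ℝ) ^ (1 - θ) ≤ M ^ (1 - θ) :=
      Real.rpow_le_rpow hj0.le (le_max_right _ _) (by linarith)
    have hC : M ^ θ * M ^ (1 - θ) = M := by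
      rw [← Real.rpow_add hM0]
      norm_num
    have hD : (t:ℝ) ^ θ * (j:ℝ) ^ (1 - θ) ≤ (t:ℝ) + (j:ℝ) := by
      calc (t:ℝ) ^ θ * (j:ℝ) ^ (1 - θ) ≤ M ^ θ * M ^ (1 - θ) := by
            apply mul_le_mul hA hB (Real.rpow_nonneg hj0.le _) (Real.rpow_nonneg hM0.le _)
        _ = M := hC
        _ ≤ (t:ℝ) + (j:ℝ) := max_le (by linarith) (by linarith)
    have hpos : (0:ℝ) < (t:ℝ) ^ θ * (j:ℝ) ^ (1 - θ) :=
      mul_pos (Real.rpow_pos_of_pos ht0 _) (Real.rpow_pos_of_pos hj0 _)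
    calc ((t:ℝ) + (j:ℝ))⁻¹ ≤ ((t:ℝ) ^ θ * (j:ℝ) ^ (1 - θ))⁻¹ := by
          apply inv_anti₀ hpos hD
      _ = (j:ℝ) ^ (θ - 1) * (t:ℝ) ^ (-θ) := by
          rw [mul_inv, ← Real.rpow_neg ht0.le, ← Real.rpow_neg hj0.le, neg_sub]
          ring
  -- pointwise bounds
  have hP1 : ∀ k t : ℕ, 1 ≤ t → t ≤ k →
      |lam k t| ≤ C₀ * (k:ℝ) ^ (ζ - 1) * (t:ℝ) ^ (-ζ) := by
    intro k t ht htk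
    have ht0 : (0:ℝ) < (t:ℝ) := by exact_mod_cast Nat.lt_of_lt_of_le Nat.zero_lt_one ht
    have hk0 : (0:ℝ) < (k:ℝ) := lt_of_lt_of_le ht0 (by exact_mod_cast htk)
    rcases lt_or_eq_of_le htk with hlt | heq
    · have hmax : max ((k:ℝ) ^ (-ζ)) ((t:ℝ) ^ (-ζ)) = (t:ℝ) ^ (-ζ) := by
        apply max_eq_right
        rw [Real.rpow_neg hk0.le, Real.rpow_neg ht0.le]
        exact inv_anti₀ (Real.rpow_pos_of_pos ht0 ζ)
          (Real.rpow_le_rpow ht0.le (by exact_mod_cast htk) hζ1.le)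
      calc |lam k t| ≤ C * (k:ℝ) ^ (ζ - 1) * max ((k:ℝ) ^ (-ζ)) ((t:ℝ) ^ (-ζ)) :=
            h2 k t ht hlt
        _ = C * ((k:ℝ) ^ (ζ - 1) * (t:ℝ) ^ (-ζ)) := by rw [hmax]; ring
        _ ≤ C₀ * ((k:ℝ) ^ (ζ - 1) * (t:ℝ) ^ (-ζ)) := by
            apply mul_le_mul_of_nonneg_right hCC₀
            exact mul_nonneg (Real.rpow_nonneg hk0.le _) (Real.rpow_nonneg ht0.le _)
        _ = C₀ * (k:ℝ) ^ (ζ - 1) * (t:ℝ) ^ (-ζ) := by ring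
    · subst heq
      calc |lam t t| ≤ C * (t:ℝ) ^ ζ * (t:ℝ) ^ (-ζ - 1) := h1 t t ht le_rfl
        _ = C * ((t:ℝ) ^ (ζ - 1) * (t:ℝ) ^ (-ζ)) := by
            rw [mul_assoc, ← Real.rpow_add ht0, ← Real.rpow_add ht0]
            congr 1
            ring
        _ ≤ C₀ * ((t:ℝ) ^ (ζ - 1) * (t:ℝ) ^ (-ζ)) := by
            apply mul_le_mul_of_nonneg_right hCC₀
            exact mul_nonneg (Real.rpow_nonneg ht0.le _) (Real.rpow_nonneg ht0.le _)
        _ = C₀ * (t:ℝ) ^ (ζ - 1) * (t:ℝ) ^ (-ζ) := by ring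
  have hP2 : ∀ k t : ℕ, 1 ≤ k → k ≤ t →
      |lam k t| ≤ C₀ * (k:ℝ) ^ ζ * (t:ℝ) ^ (-ζ - 1) := by
    intro k t hk hkt
    have hk0 : (0:ℝ) < (k:ℝ) := by exact_mod_cast Nat.lt_of_lt_of_le Nat.zero_lt_one hk
    have ht0 : (0:ℝ) < (t:ℝ) := lt_of_lt_of_le hk0 (by exact_mod_cast hkt)
    calc |lam k t| ≤ C * (k:ℝ) ^ ζ * (t:ℝ) ^ (-ζ - 1) := h1 k t hk hkt
      _ = C * ((k:ℝ) ^ ζ * (t:ℝ) ^ (-ζ - 1)) := by ring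
      _ ≤ C₀ * ((k:ℝ) ^ ζ * (t:ℝ) ^ (-ζ - 1)) := by
          apply mul_le_mul_of_nonneg_right hCC₀
          exact mul_nonneg (Real.rpow_nonneg hk0.le _) (Real.rpow_nonneg ht0.le _)
      _ = C₀ * (k:ℝ) ^ ζ * (t:ℝ) ^ (-ζ - 1) := by ring
  -- part 1 : head sum
  have part1 : ∀ θ : ℝ, 0 ≤ θ → ζ + θ < 1 → ∀ j k m : ℕ, 1 ≤ j → 1 ≤ k → m ≤ k →
      ∑ t ∈ Finset.Icc 1 m, ((t:ℝ) + (j:ℝ))⁻¹ * |lam k t|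
        ≤ C₀ * (1 - (ζ + θ))⁻¹ * (j:ℝ) ^ (θ - 1) * (k:ℝ) ^ (ζ - 1)
            * (m:ℝ) ^ (1 - (ζ + θ)) := by
    intro θ hθ0 hθζ j k m hj hk hmk
    have hj0 : (0:ℝ) < (j:ℝ) := by exact_mod_cast Nat.lt_of_lt_of_le Nat.zero_lt_one hj
    have hk0 : (0:ℝ) < (k:ℝ) := by exact_mod_cast Nat.lt_of_lt_of_le Nat.zero_lt_one hk
    have step : ∀ t ∈ Finset.Icc 1 m, ((t:ℝ) + (j:ℝ))⁻¹ * |lam k t|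
        ≤ (C₀ * (k:ℝ) ^ (ζ - 1) * (j:ℝ) ^ (θ - 1)) * (t:ℝ) ^ (-(ζ + θ)) := by
      intro t htm
      rw [Finset.mem_Icc] at htm
      have ht0 : (0:ℝ) < (t:ℝ) := by
        exact_mod_cast Nat.lt_of_lt_of_le Nat.zero_lt_one htm.1
      have e1 : ((j:ℝ) ^ (θ - 1) * (t:ℝ) ^ (-θ)) * (C₀ * (k:ℝ) ^ (ζ - 1) * (t:ℝ) ^ (-ζ))
          = (C₀ * (k:ℝ) ^ (ζ - 1) * (j:ℝ) ^ (θ - 1)) * (t:ℝ) ^ (-(ζ + θ)) := by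
        rw [show -(ζ + θ) = (-θ) + (-ζ) by ring, Real.rpow_add ht0]
        ring
      rw [← e1]
      apply mul_le_mul (wbound θ hθ0 (by linarith) t j htm.1 hj)
        (hP1 k t htm.1 (le_trans htm.2 hmk)) (abs_nonneg _)
      exact mul_nonneg (Real.rpow_nonneg hj0.le _) (Real.rpow_nonneg ht0.le _)
    calc ∑ t ∈ Finset.Icc 1 m, ((t:ℝ) + (j:ℝ))⁻¹ * |lam k t|
        ≤ ∑ t ∈ Finset.Icc 1 m,
            (C₀ * (k:ℝ) ^ (ζ - 1) * (j:ℝ) ^ (θ - 1)) * (t:ℝ) ^ (-(ζ + θ)) :=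
          Finset.sum_le_sum step
      _ = (C₀ * (k:ℝ) ^ (ζ - 1) * (j:ℝ) ^ (θ - 1))
            * ∑ t ∈ Finset.Icc 1 m, (t:ℝ) ^ (-(ζ + θ)) := by rw [← Finset.mul_sum]
      _ ≤ (C₀ * (k:ℝ) ^ (ζ - 1) * (j:ℝ) ^ (θ - 1))
            * ((1 - (ζ + θ))⁻¹ * (m:ℝ) ^ (1 - (ζ + θ))) := by
          apply mul_le_mul_of_nonneg_left (sumA15 (ζ + θ) (by linarith) hθζ m)
          positivity
      _ = C₀ * (1 - (ζ + θ))⁻¹ * (j:ℝ) ^ (θ - 1) * (k:ℝ) ^ (ζ - 1)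
            * (m:ℝ) ^ (1 - (ζ + θ)) := by ring
  -- part 2 : tail sum
  have part2 : ∀ θ : ℝ, 0 ≤ θ → θ ≤ 1 → ζ + θ ≤ 1 → ∀ j k n : ℕ, 1 ≤ j → 1 ≤ k →
      ∑ t ∈ Finset.Icc (k+1) n, ((t:ℝ) + (j:ℝ))⁻¹ * |lam k t|
        ≤ C₀ * (ζ + θ)⁻¹ * (j:ℝ) ^ (θ - 1) * (k:ℝ) ^ (-θ) := by
    intro θ hθ0 hθ1 hθζ j k n hj hk
    have hj0 : (0:ℝ) < (j:ℝ) := by exact_mod_cast Nat.lt_of_lt_of_le Nat.zero_lt_one hj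
    have hk0 : (0:ℝ) < (k:ℝ) := by exact_mod_cast Nat.lt_of_lt_of_le Nat.zero_lt_one hk
    have step : ∀ t ∈ Finset.Icc (k+1) n, ((t:ℝ) + (j:ℝ))⁻¹ * |lam k t|
        ≤ (C₀ * (k:ℝ) ^ ζ * (j:ℝ) ^ (θ - 1)) * (t:ℝ) ^ (-(ζ + 1 + θ)) := by
      intro t htm
      rw [Finset.mem_Icc] at htm
      have ht1 : 1 ≤ t := by omega
      have ht0 : (0:ℝ) < (t:ℝ) := by
        exact_mod_cast Nat.lt_of_lt_of_le Nat.zero_lt_one ht1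
      have e1 : ((j:ℝ) ^ (θ - 1) * (t:ℝ) ^ (-θ)) * (C₀ * (k:ℝ) ^ ζ * (t:ℝ) ^ (-ζ - 1))
          = (C₀ * (k:ℝ) ^ ζ * (j:ℝ) ^ (θ - 1)) * (t:ℝ) ^ (-(ζ + 1 + θ)) := by
        rw [show -(ζ + 1 + θ) = (-θ) + (-ζ - 1) by ring, Real.rpow_add ht0]
        ring
      rw [← e1]
      apply mul_le_mul (wbound θ hθ0 hθ1 t j ht1 hj)
        (hP2 k t hk (by omega)) (abs_nonneg _)
      exact mul_nonneg (Real.rpow_nonneg hj0.le _) (Real.rpow_nonneg ht0.le _)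
    have hs1 : (1:ℝ) < ζ + 1 + θ := by linarith
    have hs2 : ζ + 1 + θ ≤ 2 := by linarith
    calc ∑ t ∈ Finset.Icc (k+1) n, ((t:ℝ) + (j:ℝ))⁻¹ * |lam k t|
        ≤ ∑ t ∈ Finset.Icc (k+1) n,
            (C₀ * (k:ℝ) ^ ζ * (j:ℝ) ^ (θ - 1)) * (t:ℝ) ^ (-(ζ + 1 + θ)) :=
          Finset.sum_le_sum step
      _ = (C₀ * (k:ℝ) ^ ζ * (j:ℝ) ^ (θ - 1))
            * ∑ t ∈ Finset.Icc (k+1) n, (t:ℝ) ^ (-(ζ + 1 + θ)) := by rw [← Finset.mul_sum]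
      _ ≤ (C₀ * (k:ℝ) ^ ζ * (j:ℝ) ^ (θ - 1))
            * ((ζ + 1 + θ - 1)⁻¹ * (k:ℝ) ^ (1 - (ζ + 1 + θ))) := by
          apply mul_le_mul_of_nonneg_left (sumB15' (ζ + 1 + θ) hs1 hs2 k hk n)
          positivity
      _ = C₀ * (ζ + θ)⁻¹ * (j:ℝ) ^ (θ - 1) * ((k:ℝ) ^ ζ * (k:ℝ) ^ (1 - (ζ + 1 + θ))) := by
          rw [show ζ + 1 + θ - 1 = ζ + θ by ring]; ring
      _ = C₀ * (ζ + θ)⁻¹ * (j:ℝ) ^ (θ - 1) * (k:ℝ) ^ (-θ) := by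
          rw [← Real.rpow_add hk0, show ζ + (1 - (ζ + 1 + θ)) = -θ by ring]
  -- the constant
  have p1 : (0:ℝ) < (1 - ζ)⁻¹ := inv_pos.mpr (by linarith)
  have p2 : (0:ℝ) < ζ⁻¹ := inv_pos.mpr hζ1
  have p3 : (0:ℝ) < (1 - (ζ + 1/2))⁻¹ := inv_pos.mpr (by linarith)
  have p4 : (0:ℝ) < (ζ + 1/2)⁻¹ := inv_pos.mpr (by linarith)
  set K : ℝ := (1 - ζ)⁻¹ + ζ⁻¹ + (1 - (ζ + 1/2))⁻¹ + (ζ + 1/2)⁻¹ with hKdef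
  have hKpos : (0:ℝ) < K := by rw [hKdef]; linarith
  refine ⟨C₀ * K, mul_pos hC₀0 hKpos, ?_⟩
  intro n j k hn hj hk
  have hj0 : (0:ℝ) < (j:ℝ) := by exact_mod_cast Nat.lt_of_lt_of_le Nat.zero_lt_one hj
  have hk0 : (0:ℝ) < (k:ℝ) := by exact_mod_cast Nat.lt_of_lt_of_le Nat.zero_lt_one hk
  have hn0 : (0:ℝ) < (n:ℝ) := by exact_mod_cast Nat.lt_of_lt_of_le Nat.zero_lt_one hn
  constructor
  · -- goal 1 : k ≤ n
    intro hkn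
    have hsplit : ∑ t ∈ Finset.Icc 1 n, ((t:ℝ) + (j:ℝ))⁻¹ * |lam k t|
        = ∑ t ∈ Finset.Icc 1 k, ((t:ℝ) + (j:ℝ))⁻¹ * |lam k t|
          + ∑ t ∈ Finset.Icc (k+1) n, ((t:ℝ) + (j:ℝ))⁻¹ * |lam k t| := by
      rw [show Finset.Icc 1 n = Finset.Ioc 0 n from Finset.Icc_add_one_left_eq_Ioc 0 n,
        show Finset.Icc 1 k = Finset.Ioc 0 k from Finset.Icc_add_one_left_eq_Ioc 0 k,
        show Finset.Icc (k+1) n = Finset.Ioc k n from Finset.Icc_add_one_left_eq_Ioc k n,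
        Finset.sum_Ioc_consecutive _ (Nat.zero_le k) hkn]
    have master : ∀ θ : ℝ, 0 ≤ θ → θ ≤ 1/2 →
        ∑ t ∈ Finset.Icc 1 n, ((t:ℝ) + (j:ℝ))⁻¹ * |lam k t|
          ≤ C₀ * ((1 - (ζ + θ))⁻¹ + (ζ + θ)⁻¹) * ((j:ℝ) ^ (θ - 1) * (k:ℝ) ^ (-θ)) := by
      intro θ hθ0 hθ1
      have hθζ : ζ + θ < 1 := by linarith
      have e2 : (k:ℝ) ^ (ζ - 1) * (k:ℝ) ^ (1 - (ζ + θ)) = (k:ℝ) ^ (-θ) := by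
        rw [← Real.rpow_add hk0, show ζ - 1 + (1 - (ζ + θ)) = -θ by ring]
      calc ∑ t ∈ Finset.Icc 1 n, ((t:ℝ) + (j:ℝ))⁻¹ * |lam k t|
          ≤ (C₀ * (1 - (ζ + θ))⁻¹ * (j:ℝ) ^ (θ - 1) * (k:ℝ) ^ (ζ - 1)
                * (k:ℝ) ^ (1 - (ζ + θ)))
              + C₀ * (ζ + θ)⁻¹ * (j:ℝ) ^ (θ - 1) * (k:ℝ) ^ (-θ) := by
            rw [hsplit]
            exact add_le_add (part1 θ hθ0 hθζ j k k hj hk le_rfl)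
              (part2 θ hθ0 (by linarith) (by linarith) j k n hj hk)
        _ = C₀ * ((1 - (ζ + θ))⁻¹ + (ζ + θ)⁻¹) * ((j:ℝ) ^ (θ - 1) * (k:ℝ) ^ (-θ)) := by
            rw [show C₀ * (1 - (ζ + θ))⁻¹ * (j:ℝ) ^ (θ - 1) * (k:ℝ) ^ (ζ - 1)
                * (k:ℝ) ^ (1 - (ζ + θ))
              = C₀ * (1 - (ζ + θ))⁻¹ * (j:ℝ) ^ (θ - 1)
                * ((k:ℝ) ^ (ζ - 1) * (k:ℝ) ^ (1 - (ζ + θ))) by ring, e2]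
            ring
    rcases le_total ((j:ℝ) ^ (-(1:ℝ)/2)) ((k:ℝ) ^ (-(1:ℝ)/2)) with hmin | hmin
    · rw [min_eq_left hmin]
      have hm := master 0 le_rfl (by norm_num)
      have e3 : (j:ℝ) ^ ((0:ℝ) - 1) * (k:ℝ) ^ (-(0:ℝ))
          = (j:ℝ) ^ (-(1:ℝ)/2) * (j:ℝ) ^ (-(1:ℝ)/2) := by
        rw [← Real.rpow_add hj0, neg_zero, Real.rpow_zero, mul_one]
        norm_num
      rw [e3] at hm
      refine hm.trans ?_
      rw [show C₀ * K * (j:ℝ) ^ (-(1:ℝ)/2) * (j:ℝ) ^ (-(1:ℝ)/2)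
        = C₀ * K * ((j:ℝ) ^ (-(1:ℝ)/2) * (j:ℝ) ^ (-(1:ℝ)/2)) by ring]
      apply mul_le_mul_of_nonneg_right _ (by positivity)
      apply mul_le_mul_of_nonneg_left _ hC₀0.le
      rw [hKdef]
      simp only [add_zero, zero_add]
      linarith
    · rw [min_eq_right hmin]
      have hm := master (1/2) (by norm_num) le_rfl
      have e3 : (j:ℝ) ^ ((1:ℝ)/2 - 1) = (j:ℝ) ^ (-(1:ℝ)/2) := by norm_num
      have e4 : (k:ℝ) ^ (-((1:ℝ)/2)) = (k:ℝ) ^ (-(1:ℝ)/2) := by norm_num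
      rw [e3, e4] at hm
      refine hm.trans ?_
      rw [show C₀ * K * (j:ℝ) ^ (-(1:ℝ)/2) * (k:ℝ) ^ (-(1:ℝ)/2)
        = C₀ * K * ((j:ℝ) ^ (-(1:ℝ)/2) * (k:ℝ) ^ (-(1:ℝ)/2)) by ring]
      apply mul_le_mul_of_nonneg_right _ (by positivity)
      apply mul_le_mul_of_nonneg_left _ hC₀0.le
      rw [hKdef]
      linarith
  · -- goal 2 : n ≤ k
    intro hnk
    rcases le_total ((j:ℝ) ^ ((1:ℝ)/2)) ((n:ℝ) ^ ((1:ℝ)/2)) with hmin | hmin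
    · rw [min_eq_left hmin]
      have hm := part1 (1/2) (by norm_num) (by linarith) j k n hj hk hnk
      refine hm.trans ?_
      have e3 : (j:ℝ)⁻¹ * (j:ℝ) ^ ((1:ℝ)/2) = (j:ℝ) ^ ((1:ℝ)/2 - 1) := by
        rw [← Real.rpow_neg_one (j:ℝ), ← Real.rpow_add hj0]
        norm_num
      have e4 : (n:ℝ) ^ (1 - (ζ + 1/2)) = (n:ℝ) ^ (1/2 - ζ) := by congr 1; ring
      rw [show C₀ * K * (j:ℝ)⁻¹ * (k:ℝ) ^ (ζ - 1) * (n:ℝ) ^ (1/2 - ζ) * (j:ℝ) ^ ((1:ℝ)/2)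
        = C₀ * K * (((j:ℝ)⁻¹ * (j:ℝ) ^ ((1:ℝ)/2)) * ((k:ℝ) ^ (ζ - 1) * (n:ℝ) ^ (1/2 - ζ)))
          by ring, e3, e4]
      rw [show C₀ * (1 - (ζ + 1/2))⁻¹ * (j:ℝ) ^ ((1:ℝ)/2 - 1) * (k:ℝ) ^ (ζ - 1)
          * (n:ℝ) ^ (1/2 - ζ)
        = (C₀ * (1 - (ζ + 1/2))⁻¹)
          * ((j:ℝ) ^ ((1:ℝ)/2 - 1) * ((k:ℝ) ^ (ζ - 1) * (n:ℝ) ^ (1/2 - ζ))) by ring,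
        show C₀ * K * ((j:ℝ) ^ ((1:ℝ)/2 - 1) * ((k:ℝ) ^ (ζ - 1) * (n:ℝ) ^ (1/2 - ζ)))
        = (C₀ * K)
          * ((j:ℝ) ^ ((1:ℝ)/2 - 1) * ((k:ℝ) ^ (ζ - 1) * (n:ℝ) ^ (1/2 - ζ))) by ring]
      apply mul_le_mul_of_nonneg_right _ (by positivity)
      apply mul_le_mul_of_nonneg_left _ hC₀0.le
      rw [hKdef]
      linarith
    · rw [min_eq_right hmin]
      have hm := part1 0 le_rfl (by linarith) j k n hj hk hnk
      refine hm.trans ?_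
      have e3 : (j:ℝ) ^ ((0:ℝ) - 1) = (j:ℝ)⁻¹ := by
        rw [show (0:ℝ) - 1 = -1 by ring, Real.rpow_neg_one]
      have e4 : (n:ℝ) ^ (1/2 - ζ) * (n:ℝ) ^ ((1:ℝ)/2) = (n:ℝ) ^ (1 - (ζ + 0)) := by
        rw [← Real.rpow_add hn0]
        congr 1
        ring
      rw [show C₀ * K * (j:ℝ)⁻¹ * (k:ℝ) ^ (ζ - 1) * (n:ℝ) ^ (1/2 - ζ) * (n:ℝ) ^ ((1:ℝ)/2)
        = C₀ * K * ((j:ℝ)⁻¹ * ((k:ℝ) ^ (ζ - 1)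
            * ((n:ℝ) ^ (1/2 - ζ) * (n:ℝ) ^ ((1:ℝ)/2)))) by ring, e4]
      rw [show C₀ * (1 - (ζ + 0))⁻¹ * (j:ℝ) ^ ((0:ℝ) - 1) * (k:ℝ) ^ (ζ - 1)
          * (n:ℝ) ^ (1 - (ζ + 0))
        = (C₀ * (1 - (ζ + 0))⁻¹)
          * ((j:ℝ) ^ ((0:ℝ) - 1) * ((k:ℝ) ^ (ζ - 1) * (n:ℝ) ^ (1 - (ζ + 0)))) by ring, e3]
      rw [show C₀ * K * ((j:ℝ)⁻¹ * ((k:ℝ) ^ (ζ - 1) * (n:ℝ) ^ (1 - (ζ + 0))))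
        = (C₀ * K) * ((j:ℝ)⁻¹ * ((k:ℝ) ^ (ζ - 1) * (n:ℝ) ^ (1 - (ζ + 0)))) by ring]
      apply mul_le_mul_of_nonneg_right _ (by positivity)
      apply mul_le_mul_of_nonneg_left _ hC₀0.le
      rw [hKdef]
      rw [add_zero]
      linarith
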